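/- Let a group Γ act by homeomorphisms on a topological space X and suppose there exists d ∈ ℕ such that for every finite subset E ⊆ Γ there is a cover of X by d+1 open sets U_0,…,U_d with F(U_i, E) finite for each i. Then for every x ∈ X the stabiliser subgroup Stab(x) = {g ∈ Γ : g·x = x} is locally finite. In particular, if Γ is torsion-free (e.g., Γ = ℤ), the action is free. -/

import Mathlib

open Pointwise

/-- The set F(U,E): elements `g = gₙ⋯g₁` with each `gⱼ ∈ E` such that for some `x ∈ U`
all partial translates `gⱼ⋯g₁ • x` (j = 1,…,n) remain in `U`. -/
def dynF {Γ X : Type*} [Group Γ] [MulAction Γ X] (U : Set X) (E : Set Γ) : Set Γ :=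
  {g | ∃ L : List Γ, L ≠ [] ∧ (∀ h ∈ L, h ∈ E) ∧ g = L.reverse.prod ∧
    ∃ x ∈ U, ∀ j : ℕ, 1 ≤ j → j ≤ L.length → (L.take j).reverse.prod • x ∈ U}

/-- The marker property for an action. -/
def MarkerProperty (Γ X : Type*) [Group Γ] [MulAction Γ X] [TopologicalSpace X] : Prop :=
  ∀ F : Finset Γ, ∃ U : Set X, IsOpen U ∧
    (F : Set Γ).PairwiseDisjoint (fun g => g • U) ∧ (⋃ g : Γ, g • U) = Set.univ

/-- The dynamic asymptotic dimension is at most `d`. -/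
def DadLE (Γ X : Type*) [Group Γ] [MulAction Γ X] [TopologicalSpace X] (d : ℕ) : Prop :=
  ∀ E : Finset Γ, ∃ U : Fin (d + 1) → Set X, (∀ i, IsOpen (U i)) ∧
    (⋃ i, U i) = Set.univ ∧ ∀ i, (dynF (U i) (E : Set Γ)).Finite

/-- The dynamic asymptotic dimension, as an extended natural number (`⊤` if no `d` works). -/
noncomputable def dad (Γ X : Type*) [Group Γ] [MulAction Γ X] [TopologicalSpace X] : ℕ∞ :=
  sInf ((fun d : ℕ => (d : ℕ∞)) '' {d : ℕ | DadLE Γ X d})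

/-- A group is virtually cyclic if it has a cyclic subgroup of finite index. -/
def IsVirtuallyCyclic (Γ : Type*) [Group Γ] : Prop :=
  ∃ H : Subgroup Γ, IsCyclic H ∧ H.FiniteIndex

/-- The covering dimension of `X` is at most `n`: every open cover admits an open
refinement covering `X` in which every point belongs to at most `n+1` members. -/
def CovDimLE (X : Type*) [TopologicalSpace X] (n : ℕ) : Prop :=
  ∀ 𝒰 : Set (Set X), (∀ U ∈ 𝒰, IsOpen U) → ⋃₀ 𝒰 = Set.univ →
    ∃ 𝒱 : Set (Set X), (∀ V ∈ 𝒱, IsOpen V) ∧ ⋃₀ 𝒱 = Set.univ ∧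
      (∀ V ∈ 𝒱, ∃ U ∈ 𝒰, V ⊆ U) ∧
      ∀ x : X, ∃ s : Finset (Set X), {V ∈ 𝒱 | x ∈ V} ⊆ ↑s ∧ s.card ≤ n + 1

lemma list_prod_smul_fixed {Γ X : Type*} [Group Γ] [MulAction Γ X] {x : X}
    (L : List Γ) (hL : ∀ g ∈ L, g • x = x) : L.prod • x = x := by
  induction L with
  | nil => simp
  | cons a t ih =>
      rw [List.prod_cons, mul_smul, ih (fun g hg => hL g (List.mem_cons_of_mem a hg)),
        hL a List.mem_cons_self]

/-- Finiteness of the dynamic asymptotic dimension forces all point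
stabilisers to be locally finite; in particular torsion-free groups act freely. -/
theorem stabilizer_locallyFinite_of_dad_finite
    (Γ X : Type*) [Group Γ] [TopologicalSpace X]
    [MulAction Γ X] [ContinuousConstSMul Γ X]
    (h : ∃ d : ℕ, DadLE Γ X d) :
    (∀ x : X, ∀ S : Finset Γ, (∀ g ∈ S, g • x = x) →
      ((Subgroup.closure (S : Set Γ) : Subgroup Γ) : Set Γ).Finite) ∧
    ((∀ g : Γ, IsOfFinOrder g → g = 1) →
      ∀ (g : Γ) (x : X), g • x = x → g = 1) := by
  classical
  obtain ⟨d, hd⟩ := h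
  have main : ∀ x : X, ∀ S : Finset Γ, (∀ g ∈ S, g • x = x) →
      ((Subgroup.closure (S : Set Γ) : Subgroup Γ) : Set Γ).Finite := by
    intro x S hS
    set E : Finset Γ := S ∪ S⁻¹ with hE
    obtain ⟨U, hUopen, hUcov, hUfin⟩ := hd E
    have hx : x ∈ ⋃ i, U i := hUcov ▸ Set.mem_univ x
    obtain ⟨i, hxi⟩ := Set.mem_iUnion.mp hx
    have hfix : ∀ g ∈ (E : Set Γ), g • x = x := by
      intro g hg
      rw [hE] at hg
      simp only [Finset.coe_union, Set.mem_union, Finset.coe_inv, Set.mem_inv] at hg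
      rcases hg with hg | hg
      · exact hS g hg
      · have := hS g⁻¹ hg
        calc g • x = g • g⁻¹ • x := by rw [this]
        _ = x := by rw [smul_smul, mul_inv_cancel, one_smul]
    apply Set.Finite.subset ((hUfin i).union (Set.finite_singleton 1))
    intro g hg
    have hg' : g ∈ Submonoid.closure ((S : Set Γ) ∪ (S : Set Γ)⁻¹) := by
      rw [← Subgroup.closure_toSubmonoid]
      exact hg
    obtain ⟨l, hl, hlp⟩ := Submonoid.exists_list_of_mem_closure hg'
    rcases eq_or_ne l [] with rfl | hne
    · right
      simp only [List.prod_nil] at hlp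
      simp [← hlp]
    · left
      refine ⟨l.reverse, by simpa using hne, ?_, by simp [hlp], x, hxi, ?_⟩
      · intro a ha
        have := hl a (List.mem_reverse.mp ha)
        rw [hE]
        simp only [Finset.coe_union, Finset.coe_inv]
        exact this
      · intro j _ _
        have : ((l.reverse.take j).reverse.prod) • x = x := by
          apply list_prod_smul_fixed
          intro a ha
          apply hfix
          have : a ∈ l := by
            have := List.mem_reverse.mp ha
            exact List.mem_reverse.mp (List.mem_of_mem_take this)
          rw [hE]
          simp only [Finset.coe_union, Finset.coe_inv]
          exact hl a this
        rw [this]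
        exact hxi
  refine ⟨main, ?_⟩
  intro htf g x hgx
  have hfin := main x {g} (by simpa using hgx)
  have hmem : g ∈ Subgroup.closure ({g} : Finset Γ) := by
    apply Subgroup.subset_closure; simp
  have : Finite ((Subgroup.closure (({g} : Finset Γ) : Set Γ) : Subgroup Γ) : Set Γ) :=
    hfin.to_subtype
  have hfo : IsOfFinOrder (⟨g, hmem⟩ : Subgroup.closure (({g} : Finset Γ) : Set Γ)) :=
    isOfFinOrder_of_finite _
  have := MonoidHom.isOfFinOrder (Subgroup.closure (({g} : Finset Γ) : Set Γ)).subtype hfo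
  exact htf g this
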